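/- arXiv:2001.00360 — 2 statements merged into one kernel-verified Lean document; each statement's English description precedes it below -/
import Mathlib

section
/- Let d ≥ 1, M ≥ 1, let I_1,…,I_d and R_1,…,R_{d+1} be positive integers, and for each sample index m ∈ {1,…,M} and each mode i ∈ {1,…,d} let X_m^{(i)} ∈ ℝ^{R_i × I_i × R_{i+1}} be the i-th TT-core of the m-th sample (all samples having the same TT-ranks R_1,…,R_{d+1}). For each mode i let k_i : ℝ^{I_i} × ℝ^{I_i} → ℝ be a positive semidefinite kernel. Define the K-STTM-Prod kernel matrix G ∈ ℝ^{M×M} by G(a,b) = Σ_{r ∈ ∏_{i=1}^{d+1}{1,…,R_i}} Σ_{r̂ ∈ ∏_{i=1}^{d+1}{1,…,R_i}} ∏_{i=1}^{d} k_i( X_a^{(i)}(r_i,·,r_{i+1}), X_b^{(i)}(r̂_i,·,r̂_{i+1}) ). Then G is a symmetric positive semidefinite matrix. -/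
open Matrix
lemma hadamard_psd {n : Type*} [Fintype n] [DecidableEq n] {A B : Matrix n n ℝ}
    (hA : A.PosSemidef) (hB : B.PosSemidef) :
    (Matrix.of fun p q => A p q * B p q).PosSemidef := by
  obtain ⟨C, hC⟩ : ∃ C : Matrix n n ℝ, A = Cᴴ * C := by
    open scoped MatrixOrder in exact CStarAlgebra.nonneg_iff_eq_star_mul_self.mp hA.nonneg
  have expand : ∀ p q, A p q = ∑ j, C j p * C j q := by
    intro p q; rw [hC]; simp [Matrix.mul_apply]
  rw [Matrix.posSemidef_iff_dotProduct_mulVec]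
  constructor
  · ext p q
    have hAe : A q p = A p q := by simpa using congrFun (congrFun hA.1 p) q
    have hBe : B q p = B p q := by simpa using congrFun (congrFun hB.1 p) q
    simp [hAe, hBe]
  · intro x
    simp only [star_trivial]
    have key : x ⬝ᵥ ((Matrix.of fun p q => A p q * B p q) *ᵥ x) =
        ∑ j, (fun p => C j p * x p) ⬝ᵥ (B *ᵥ (fun p => C j p * x p)) := by
      calc x ⬝ᵥ ((Matrix.of fun p q => A p q * B p q) *ᵥ x)
          = ∑ p, ∑ q, ∑ j, (C j p * x p) * B p q * (C j q * x q) := by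
            simp only [dotProduct, Matrix.mulVec, Matrix.of_apply]
            refine Finset.sum_congr rfl fun p _ => ?_
            rw [Finset.mul_sum]
            refine Finset.sum_congr rfl fun q _ => ?_
            rw [expand p q, Finset.sum_mul, Finset.sum_mul, Finset.mul_sum]
            exact Finset.sum_congr rfl fun j _ => by ring
        _ = ∑ j, ∑ p, ∑ q, (C j p * x p) * B p q * (C j q * x q) := by
            rw [show (∑ p, ∑ q, ∑ j, (C j p * x p) * B p q * (C j q * x q))
                = ∑ p, ∑ j, ∑ q, (C j p * x p) * B p q * (C j q * x q) from
              Finset.sum_congr rfl fun p _ => Finset.sum_comm]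
            exact Finset.sum_comm
        _ = ∑ j, (fun p => C j p * x p) ⬝ᵥ (B *ᵥ (fun p => C j p * x p)) := by
            refine Finset.sum_congr rfl fun j _ => ?_
            simp only [dotProduct, Matrix.mulVec, Finset.mul_sum]
            exact Finset.sum_congr rfl fun p _ => Finset.sum_congr rfl fun q _ => by ring
    rw [key]
    refine Finset.sum_nonneg fun j _ => ?_
    simpa using hB.dotProduct_mulVec_nonneg (fun p => C j p * x p)

lemma prod_gram_psd {n : Type*} [Fintype n] [DecidableEq n] {ι : Type*} [DecidableEq ι]
    (A : ι → Matrix n n ℝ) (hA : ∀ i, (A i).PosSemidef) (s : Finset ι) :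
    (Matrix.of fun p q => ∏ i ∈ s, A i p q).PosSemidef := by
  induction s using Finset.induction with
  | empty =>
      simp only [Finset.prod_empty]
      rw [Matrix.posSemidef_iff_dotProduct_mulVec]
      constructor
      · ext p q; simp
      · intro x
        have : (x ⬝ᵥ ((Matrix.of fun _ _ : n => (1:ℝ)) *ᵥ x)) = (∑ p, x p) * (∑ p, x p) := by
          simp [dotProduct, Matrix.mulVec, Finset.mul_sum, Finset.sum_mul, mul_comm]
        simp only [star_trivial, this]
        exact mul_self_nonneg _
  | @insert a s' hi ih =>
      have := hadamard_psd (hA a) ih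
      convert this using 2
      ext p q
      simp [Finset.prod_insert hi]


/-- **K-STTM-Prod kernel validity.**
Given `M` samples, each represented as a tensor train with cores
`X m i : Fin (R i.castSucc) → Fin (I i) → Fin (R i.succ) → ℝ` (all samples sharing the same
TT-ranks `R`), and given for each mode `i` a positive semidefinite kernel
`k i : (Fin (I i) → ℝ) → (Fin (I i) → ℝ) → ℝ` (symmetric, with PSD Gram matrices on every
finite family), the K-STTM-Prod kernel matrix
`G a b = ∑_{r, r̂} ∏_i k i (X a i (r_i, ·, r_{i+1})) (X b i (r̂_i, ·, r̂_{i+1}))`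
is a (symmetric) positive semidefinite matrix. -/

theorem ksttm_prod_kernel_posSemidef
    (d M : ℕ) (hd : 1 ≤ d) (hM : 1 ≤ M)
    (I : Fin d → ℕ) (R : Fin (d + 1) → ℕ)
    (hI : ∀ i, 1 ≤ I i) (hR : ∀ i, 1 ≤ R i)
    (X : Fin M → (i : Fin d) → Fin (R i.castSucc) → Fin (I i) → Fin (R i.succ) → ℝ)
    (k : (i : Fin d) → (Fin (I i) → ℝ) → (Fin (I i) → ℝ) → ℝ)
    (hsymm : ∀ (i : Fin d) (x y : Fin (I i) → ℝ), k i x y = k i y x)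
    (hpsd : ∀ (i : Fin d) (m : ℕ) (v : Fin m → (Fin (I i) → ℝ)),
      (Matrix.of fun a b : Fin m => k i (v a) (v b)).PosSemidef) :
    (Matrix.of fun a b : Fin M =>
      ∑ r : (j : Fin (d + 1)) → Fin (R j), ∑ r' : (j : Fin (d + 1)) → Fin (R j),
        ∏ i : Fin d,
          k i (fun j => X a i (r i.castSucc) j (r i.succ))
              (fun j => X b i (r' i.castSucc) j (r' i.succ))).PosSemidef := by
  classical
  let N := (Fin M) × ((j : Fin (d + 1)) → Fin (R j))
  let w : (i : Fin d) → N → (Fin (I i) → ℝ) :=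
    fun i p j => X p.1 i (p.2 i.castSucc) j (p.2 i.succ)
  have hAi : ∀ i : Fin d, (Matrix.of fun p q : N => k i (w i p) (w i q)).PosSemidef := by
    intro i
    let e := Fintype.equivFin N
    have heq : (Matrix.of fun p q : N => k i (w i p) (w i q)) =
        (Matrix.of fun a b : Fin (Fintype.card N) =>
          k i (w i (e.symm a)) (w i (e.symm b))).submatrix e e := by
      ext p q; simp
    rw [heq]
    exact (hpsd i (Fintype.card N) (fun m => w i (e.symm m))).submatrix e
  have hK := prod_gram_psd (fun i => Matrix.of fun p q : N => k i (w i p) (w i q))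
    hAi Finset.univ
  let Bm : Matrix (Fin M) N ℝ := Matrix.of fun a p => if p.1 = a then 1 else 0
  have hfact : (Matrix.of fun a b : Fin M =>
      ∑ r : (j : Fin (d + 1)) → Fin (R j), ∑ r' : (j : Fin (d + 1)) → Fin (R j),
        ∏ i : Fin d,
          k i (fun j => X a i (r i.castSucc) j (r i.succ))
              (fun j => X b i (r' i.castSucc) j (r' i.succ))) =
      Bm * (Matrix.of fun p q : N => ∏ i ∈ Finset.univ,
        (Matrix.of fun p q : N => k i (w i p) (w i q)) p q) * Bmᴴ := by
    ext a b
    simp only [Matrix.mul_apply, Matrix.conjTranspose_apply, Matrix.of_apply, star_trivial,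
      Bm, Fintype.sum_prod_type, ite_mul, mul_ite, one_mul, zero_mul, mul_zero, mul_one,
      Finset.sum_ite_irrel, Finset.sum_const_zero, Finset.sum_ite_eq, Finset.sum_ite_eq', Finset.mem_univ, if_true, w, N,
      Fintype.sum_prod_type]
    rw [Finset.sum_comm]
  rw [hfact]
  exact hK.mul_mul_conjTranspose_same Bm
end

section
/- Let d ≥ 1, M ≥ 1, let I_1,…,I_d and R_1,…,R_{d+1} be positive integers, and for each sample index m ∈ {1,…,M} and each mode i ∈ {1,…,d} let X_m^{(i)} ∈ ℝ^{R_i × I_i × R_{i+1}} be the i-th TT-core of the m-th sample (all samples having the same TT-ranks R_1,…,R_{d+1}). For each mode i let k_i : ℝ^{I_i} × ℝ^{I_i} → ℝ be a positive semidefinite kernel. Define the K-STTM-Sum kernel matrix G ∈ ℝ^{M×M} by G(a,b) = Σ_{r ∈ ∏_{i=1}^{d+1}{1,…,R_i}} Σ_{r̂ ∈ ∏_{i=1}^{d+1}{1,…,R_i}} Σ_{i=1}^{d} k_i( X_a^{(i)}(r_i,·,r_{i+1}), X_b^{(i)}(r̂_i,·,r̂_{i+1}) ). Then G is a symmetric positive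 semidefinite matrix. -/
/-- **K-STTM-Sum kernel validity.**
Given `M` samples, each represented as a tensor train with cores
`X m i : Fin (R i.castSucc) → Fin (I i) → Fin (R i.succ) → ℝ` (all samples sharing the same
TT-ranks `R`), and given for each mode `i` a positive semidefinite kernel
`k i : (Fin (I i) → ℝ) → (Fin (I i) → ℝ) → ℝ` (symmetric, with PSD Gram matrices on every
finite family), the K-STTM-Sum kernel matrix
`G a b = ∑_{r, r̂} ∑_i k i (X a i (r_i, ·, r_{i+1})) (X b i (r̂_i, ·, r̂_{i+1}))`
is a (symmetric) positive semidefinite matrix. -/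
theorem ksttm_sum_kernel_posSemidef
    (d M : ℕ) (hd : 1 ≤ d) (hM : 1 ≤ M)
    (I : Fin d → ℕ) (R : Fin (d + 1) → ℕ)
    (hI : ∀ i, 1 ≤ I i) (hR : ∀ i, 1 ≤ R i)
    (X : Fin M → (i : Fin d) → Fin (R i.castSucc) → Fin (I i) → Fin (R i.succ) → ℝ)
    (k : (i : Fin d) → (Fin (I i) → ℝ) → (Fin (I i) → ℝ) → ℝ)
    (hsymm : ∀ (i : Fin d) (x y : Fin (I i) → ℝ), k i x y = k i y x)
    (hpsd : ∀ (i : Fin d) (m : ℕ) (v : Fin m → (Fin (I i) → ℝ)),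
      (Matrix.of fun a b : Fin m => k i (v a) (v b)).PosSemidef) :
    (Matrix.of fun a b : Fin M =>
      ∑ r : (j : Fin (d + 1)) → Fin (R j), ∑ r' : (j : Fin (d + 1)) → Fin (R j),
        ∑ i : Fin d,
          k i (fun j => X a i (r i.castSucc) j (r i.succ))
              (fun j => X b i (r' i.castSucc) j (r' i.succ))).PosSemidef := by
  classical
  rw [Matrix.posSemidef_iff_dotProduct_mulVec]
  constructor
  · ext a b
    simp only [Matrix.conjTranspose_apply, Matrix.of_apply, star_trivial]
    rw [Finset.sum_comm]
    exact Finset.sum_congr rfl fun r _ => Finset.sum_congr rfl fun r' _ =>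
      Finset.sum_congr rfl fun i _ => hsymm i _ _
  · intro x
    simp only [dotProduct, Matrix.mulVec, dotProduct, Pi.star_apply,
      star_trivial, Matrix.of_apply, Finset.mul_sum, Finset.sum_mul]
    have key : ∀ i : Fin d,
        0 ≤ ∑ a : Fin M, ∑ b : Fin M, ∑ r : (j : Fin (d + 1)) → Fin (R j),
            ∑ r' : (j : Fin (d + 1)) → Fin (R j),
          x a * (k i (fun j => X a i (r i.castSucc) j (r i.succ))
              (fun j => X b i (r' i.castSucc) j (r' i.succ)) * x b) := by
      intro i
      set T := (j : Fin (d + 1)) → Fin (R j) with hT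
      set e := (Fintype.equivFin (Fin M × T)).symm with he
      set f : (Fin M × T) → (Fin M × T) → ℝ := fun p q =>
        x p.1 * (k i (fun j => X p.1 i (p.2 i.castSucc) j (p.2 i.succ))
            (fun j => X q.1 i (q.2 i.castSucc) j (q.2 i.succ)) * x q.1) with hf
      have h := (hpsd i (Fintype.card (Fin M × T))
        (fun p => fun j => X (e p).1 i ((e p).2 i.castSucc) j ((e p).2 i.succ))).dotProduct_mulVec_nonneg
        (fun p => x (e p).1)
      simp only [dotProduct, Matrix.mulVec, dotProduct, Pi.star_apply,
        star_trivial, Matrix.of_apply, Finset.mul_sum] at h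
      calc (0:ℝ) ≤ ∑ p : Fin (Fintype.card (Fin M × T)),
            ∑ q : Fin (Fintype.card (Fin M × T)), f (e p) (e q) := h
        _ = ∑ p : Fin M × T, ∑ q : Fin (Fintype.card (Fin M × T)), f p (e q) :=
            Equiv.sum_comp e (fun p => ∑ q, f p (e q))
        _ = ∑ p : Fin M × T, ∑ q : Fin M × T, f p q :=
            Finset.sum_congr rfl fun p _ => Equiv.sum_comp e (f p)
        _ = ∑ a : Fin M, ∑ r : T, ∑ q : Fin M × T, f (a, r) q :=
            Fintype.sum_prod_type _
        _ = ∑ a : Fin M, ∑ r : T, ∑ b : Fin M, ∑ r' : T, f (a, r) (b, r') :=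
            Finset.sum_congr rfl fun a _ => Finset.sum_congr rfl fun r _ =>
              Fintype.sum_prod_type _
        _ = _ := Finset.sum_congr rfl fun a _ => Finset.sum_comm
    have hsum := Finset.sum_nonneg (fun i (_ : i ∈ Finset.univ) => key i)
    rw [Finset.sum_comm] at hsum
    calc (0:ℝ) ≤ _ := hsum
      _ = _ := by
          refine Finset.sum_congr rfl fun a _ => ?_
          rw [Finset.sum_comm]
          refine Finset.sum_congr rfl fun b _ => ?_
          rw [Finset.sum_comm]
          refine Finset.sum_congr rfl fun r _ => ?_
          rw [Finset.sum_comm]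
end
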